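/- Let {G_i, φ_i^j : i ∈ I} be a directed system of groups over a directed set I, and for each i fix a functorial free presentation G_i ≅ F_i/R_i. Then the c-nilpotent multiplier commutes with the direct limit: colim_i M^{(c)}(G_i) ≅ M^{(c)}(colim_i G_i), for every c ≥ 1. -/

import Mathlib

/-- `[R, _n F]`. -/
def iterCommWith {F : Type*} [Group F] (R : Subgroup F) : ℕ → Subgroup F
  | 0 => R
  | n + 1 => ⁅iterCommWith R n, (⊤ : Subgroup F)⁆

instance iterCommWith_normal {F : Type*} [Group F] (R : Subgroup F) [R.Normal] (n : ℕ) :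
    (iterCommWith R n).Normal := by
  induction n with
  | zero => assumption
  | succ n ih => exact Subgroup.commutator_normal _ _

/-- The kernel of the canonical presentation `FreeGroup G → G`. -/
def presKer (G : Type*) [Group G] : Subgroup (FreeGroup G) :=
  (FreeGroup.lift (id : G → G)).ker

instance presKer_normal (G : Type*) [Group G] : (presKer G).Normal :=
  MonoidHom.normal_ker _

/-- The `c`-nilpotent multiplier `M^{(c)}(G) = (R ∩ γ_{c+1}(F))/[R, _c F]`, computed from the
canonical free presentation `F = FreeGroup G`, `R = ker (F → G)`. -/
def nilMult (c : ℕ) (G : Type*) [Group G] :=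
  (presKer G ⊓ Subgroup.lowerCentralSeries (⊤ : Subgroup (FreeGroup G)) c : Subgroup (FreeGroup G)) ⧸
    ((iterCommWith (presKer G) c).subgroupOf
      (presKer G ⊓ Subgroup.lowerCentralSeries (⊤ : Subgroup (FreeGroup G)) c : Subgroup (FreeGroup G)))

instance (c : ℕ) (G : Type*) [Group G] : Group (nilMult c G) := by
  unfold nilMult; infer_instance

/-- A homomorphism `Mc(G) →* Mc(H)` is "induced" by `φ : G →* H` if it is compatible with
`FreeGroup.map φ` on the canonical presentations. -/
def IsInducedMap {G H : Type*} [Group G] [Group H] (c : ℕ) (φ : G →* H)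
    (m : nilMult c G →* nilMult c H) : Prop :=
  ∀ (x : FreeGroup G) (hx : x ∈ presKer G ⊓ Subgroup.lowerCentralSeries (⊤ : Subgroup (FreeGroup G)) c)
    (hx' : FreeGroup.map φ x ∈ presKer H ⊓ Subgroup.lowerCentralSeries (⊤ : Subgroup (FreeGroup H)) c),
    m (QuotientGroup.mk ⟨x, hx⟩) = QuotientGroup.mk ⟨FreeGroup.map φ x, hx'⟩

open scoped commutatorElement

section Aux

variable {G H : Type*} [Group G] [Group H]

theorem lift_id_map (φ : G →* H) (x : FreeGroup G) :
    FreeGroup.lift (id : H → H) (FreeGroup.map (⇑φ) x) = φ (FreeGroup.lift (id : G → G) x) :=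
  DFunLike.congr_fun
    (FreeGroup.ext_hom ((FreeGroup.lift (id : H → H)).comp (FreeGroup.map (⇑φ)))
      (φ.comp (FreeGroup.lift (id : G → G))) (fun a => by simp)) x

theorem mem_presKer_iff (x : FreeGroup G) :
    x ∈ presKer G ↔ FreeGroup.lift (id : G → G) x = 1 := Iff.rfl

theorem mem_presKer_map (φ : G →* H) {x : FreeGroup G} (hx : x ∈ presKer G) :
    FreeGroup.map (⇑φ) x ∈ presKer H := by
  rw [mem_presKer_iff, lift_id_map, (mem_presKer_iff x).mp hx, map_one]

theorem mem_iterComm_map (φ : G →* H) (n : ℕ) {x : FreeGroup G}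
    (hx : x ∈ iterCommWith (presKer G) n) :
    FreeGroup.map (⇑φ) x ∈ iterCommWith (presKer H) n := by
  induction n generalizing x with
  | zero => exact mem_presKer_map φ hx
  | succ n ih =>
    have key : Subgroup.map (FreeGroup.map (⇑φ)) (iterCommWith (presKer G) (n + 1)) ≤
        iterCommWith (presKer H) (n + 1) := by
      show Subgroup.map (FreeGroup.map (⇑φ)) ⁅iterCommWith (presKer G) n, (⊤ : Subgroup _)⁆ ≤
        ⁅iterCommWith (presKer H) n, (⊤ : Subgroup _)⁆
      rw [Subgroup.map_commutator]
      refine Subgroup.commutator_mono ?_ le_top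
      rintro _ ⟨y, hy, rfl⟩
      exact ih hy
    exact key (Subgroup.mem_map_of_mem _ hx)

theorem mem_K_map (φ : G →* H) (c : ℕ) {x : FreeGroup G}
    (hx : x ∈ presKer G ⊓ Subgroup.lowerCentralSeries (⊤ : Subgroup (FreeGroup G)) c) :
    FreeGroup.map (⇑φ) x ∈ presKer H ⊓ Subgroup.lowerCentralSeries (⊤ : Subgroup (FreeGroup H)) c :=
  Subgroup.mem_inf.mpr ⟨mem_presKer_map φ (Subgroup.mem_inf.mp hx).1,
    lowerCentralSeries.map (FreeGroup.map (⇑φ)) c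
      (Subgroup.mem_map_of_mem _ (Subgroup.mem_inf.mp hx).2)⟩

theorem exists_finset_closure {α : Type*} (z : FreeGroup α) :
    ∃ S : Finset α, z ∈ Subgroup.closure (FreeGroup.of '' (S : Set α)) := by
  classical
  induction z using FreeGroup.induction_on with
  | C1 => exact ⟨∅, one_mem _⟩
  | of a => exact ⟨{a}, Subgroup.subset_closure ⟨a, by simp, rfl⟩⟩
  | inv_of a _ => exact ⟨{a}, inv_mem (Subgroup.subset_closure ⟨a, by simp, rfl⟩)⟩
  | mul x y ihx ihy =>
    obtain ⟨S, hS⟩ := ihx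
    obtain ⟨T, hT⟩ := ihy
    refine ⟨S ∪ T, mul_mem ?_ ?_⟩
    · exact Subgroup.closure_mono (Set.image_mono (by simp [Finset.coe_subset])) hS
    · exact Subgroup.closure_mono (Set.image_mono (by simp [Finset.coe_subset])) hT

end Aux

/-- The `c`-nilpotent multiplier commutes with direct limits: if `Gc` is the direct limit of a
directed system `{G i}` (expressed by the standard filtered-colimit properties), then
`M^{(c)}(Gc)`, with the induced maps, is the direct limit of the system `{M^{(c)}(G i)}`. -/
theorem nilMult_commutes_with_directLimit
    (J : Type*) [Preorder J] [IsDirected J (· ≤ ·)] [Nonempty J]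
    (G : J → Type*) [∀ i, Group (G i)]
    (f : ∀ i j : J, i ≤ j → (G i →* G j))
    (hf_id : ∀ i (h : i ≤ i), f i i h = MonoidHom.id (G i))
    (hf_comp : ∀ i j k (hij : i ≤ j) (hjk : j ≤ k) (x : G i),
      f j k hjk (f i j hij x) = f i k (le_trans hij hjk) x)
    (Gc : Type*) [Group Gc] (g : ∀ i, G i →* Gc)
    (hg_compat : ∀ i j (h : i ≤ j) (x : G i), g j (f i j h x) = g i x)
    (hg_surj : ∀ y : Gc, ∃ (i : J) (x : G i), g i x = y)
    (hg_eq : ∀ i (x x' : G i), g i x = g i x' → ∃ (j : J) (h : i ≤ j), f i j h x = f i j h x')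
    (c : ℕ) (hc : 1 ≤ c)
    (m : ∀ i j : J, i ≤ j → (nilMult c (G i) →* nilMult c (G j)))
    (hm : ∀ i j (h : i ≤ j), IsInducedMap c (f i j h) (m i j h))
    (mg : ∀ i, nilMult c (G i) →* nilMult c Gc)
    (hmg : ∀ i, IsInducedMap c (g i) (mg i)) :
    (∀ i j (h : i ≤ j) (x : nilMult c (G i)), mg j (m i j h x) = mg i x) ∧
    (∀ y : nilMult c Gc, ∃ (i : J) (x : nilMult c (G i)), mg i x = y) ∧
    (∀ i (x x' : nilMult c (G i)), mg i x = mg i x' →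
      ∃ (j : J) (h : i ≤ j), m i j h x = m i j h x') := by
  classical
  -- composition of free-group maps along the system
  have hgf : ∀ i j (h : i ≤ j) (x : FreeGroup (G i)),
      FreeGroup.map (⇑(g j)) (FreeGroup.map (⇑(f i j h)) x) = FreeGroup.map (⇑(g i)) x := by
    intro i j h x
    rw [FreeGroup.map.comp, show (⇑(g j) ∘ ⇑(f i j h)) = ⇑(g i) from funext (hg_compat i j h)]
  have hff : ∀ i j k (hij : i ≤ j) (hjk : j ≤ k) (x : FreeGroup (G i)),
      FreeGroup.map (⇑(f j k hjk)) (FreeGroup.map (⇑(f i j hij)) x)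
        = FreeGroup.map (⇑(f i k (le_trans hij hjk))) x := by
    intro i j k hij hjk x
    rw [FreeGroup.map.comp,
      show (⇑(f j k hjk) ∘ ⇑(f i j hij)) = ⇑(f i k (le_trans hij hjk)) from
        funext (hf_comp i j k hij hjk)]
  -- every element of `FreeGroup Gc` lifts to some stage
  have hlift : ∀ w : FreeGroup Gc, ∃ (i : J) (w0 : FreeGroup (G i)),
      FreeGroup.map (⇑(g i)) w0 = w := by
    intro w
    induction w using FreeGroup.induction_on with
    | C1 =>
      obtain ⟨i0⟩ := (inferInstance : Nonempty J)
      exact ⟨i0, 1, map_one _⟩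
    | of a =>
      obtain ⟨i, x, hx⟩ := hg_surj a
      exact ⟨i, FreeGroup.of x, by rw [FreeGroup.map.of, hx]⟩
    | inv_of a ih =>
      obtain ⟨i, w0, h0⟩ := ih
      exact ⟨i, w0⁻¹, by rw [map_inv, h0]⟩
    | mul x y ihx ihy =>
      obtain ⟨i, u, hu⟩ := ihx
      obtain ⟨j, v, hv⟩ := ihy
      obtain ⟨k, hik, hjk⟩ := directed_of (· ≤ ·) i j
      exact ⟨k, FreeGroup.map (⇑(f i k hik)) u * FreeGroup.map (⇑(f j k hjk)) v,
        by rw [map_mul, hgf, hgf, hu, hv]⟩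
  -- eventual triviality of elements of `FreeGroup (G k)` dying in `FreeGroup Gc`
  have heq1 : ∀ (k : J) (z : FreeGroup (G k)), FreeGroup.map (⇑(g k)) z = 1 →
      ∃ (l : J) (h : k ≤ l), FreeGroup.map (⇑(f k l h)) z = 1 := by
    intro k z hz
    obtain ⟨S, hS⟩ := exists_finset_closure z
    have hpair : ∀ p : G k × G k, ∃ (l : J) (h : k ≤ l),
        g k p.1 = g k p.2 → f k l h p.1 = f k l h p.2 := by
      intro p
      by_cases hp : g k p.1 = g k p.2
      · obtain ⟨j, h, hj⟩ := hg_eq k p.1 p.2 hp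
        exact ⟨j, h, fun _ => hj⟩
      · exact ⟨k, le_refl k, fun h => absurd h hp⟩
    choose idx hidx hfidx using hpair
    obtain ⟨M, hM⟩ := (insert k ((S ×ˢ S).image idx)).exists_le
    have hkM : k ≤ M := hM k (Finset.mem_insert_self _ _)
    have hmerge : ∀ a ∈ S, ∀ b ∈ S, g k a = g k b → f k M hkM a = f k M hkM b := by
      intro a ha b hb hab
      have hpM : idx (a, b) ≤ M := hM _ (Finset.mem_insert_of_mem
        (Finset.mem_image_of_mem idx (Finset.mem_product.mpr ⟨ha, hb⟩)))
      calc f k M hkM a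
          = f (idx (a, b)) M hpM (f k (idx (a, b)) (hidx (a, b)) a) :=
            (hf_comp _ _ _ _ _ a).symm
        _ = f (idx (a, b)) M hpM (f k (idx (a, b)) (hidx (a, b)) b) := by
            rw [hfidx (a, b) hab]
        _ = f k M hkM b := hf_comp _ _ _ _ _ b
    have hfun : ∃ r : Gc → G M, ∀ a ∈ S, r (g k a) = f k M hkM a := by
      refine ⟨fun y => if h : ∃ a ∈ S, g k a = y then f k M hkM h.choose else 1, ?_⟩
      intro a ha
      have hex : ∃ b ∈ S, g k b = g k a := ⟨a, ha, rfl⟩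
      simp only [dif_pos hex]
      exact hmerge _ hex.choose_spec.1 _ ha hex.choose_spec.2
    obtain ⟨r, hr⟩ := hfun
    have hagree : ∀ w, w ∈ Subgroup.closure (FreeGroup.of '' (S : Set (G k))) →
        FreeGroup.map (⇑(f k M hkM)) w = FreeGroup.map (r ∘ ⇑(g k)) w := by
      intro w hw
      refine Subgroup.closure_induction ?_ ?_ ?_ ?_ hw
      · rintro x ⟨a, ha, rfl⟩
        simp only [FreeGroup.map.of, Function.comp_apply, hr a ha]
      · simp
      · intro x y hx hy ihx ihy
        rw [map_mul, map_mul, ihx, ihy]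
      · intro x hx ihx
        rw [map_inv, map_inv, ihx]
    refine ⟨M, hkM, ?_⟩
    rw [hagree z hS, ← FreeGroup.map.comp, hz, map_one]
  have heq2 : ∀ (k : J) (z z' : FreeGroup (G k)),
      FreeGroup.map (⇑(g k)) z = FreeGroup.map (⇑(g k)) z' →
      ∃ (l : J) (h : k ≤ l), FreeGroup.map (⇑(f k l h)) z = FreeGroup.map (⇑(f k l h)) z' := by
    intro k z z' hzz
    obtain ⟨l, h, hl⟩ := heq1 k (z⁻¹ * z') (by rw [map_mul, map_inv, hzz, inv_mul_cancel])
    rw [map_mul, map_inv] at hl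
    exact ⟨l, h, inv_mul_eq_one.mp hl⟩
  -- lifting from the lower central series
  have hliftγ : ∀ (n : ℕ) (w : FreeGroup Gc), w ∈ Subgroup.lowerCentralSeries (⊤ : Subgroup (FreeGroup Gc)) n →
      ∃ (i : J) (w0 : FreeGroup (G i)), w0 ∈ Subgroup.lowerCentralSeries (⊤ : Subgroup (FreeGroup (G i))) n ∧
        FreeGroup.map (⇑(g i)) w0 = w := by
    intro n
    induction n with
    | zero =>
      intro w _
      obtain ⟨i, w0, h0⟩ := hlift w
      exact ⟨i, w0, Subgroup.mem_top _, h0⟩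
    | succ n ih =>
      intro w hw
      rw [lowerCentralSeries_succ, Subgroup.commutator_def] at hw
      refine Subgroup.closure_induction ?_ ?_ ?_ ?_ hw
      · rintro x ⟨p, hp, q, -, rfl⟩
        obtain ⟨i, p0, hp0, hp0e⟩ := ih p hp
        obtain ⟨j, q0, hq0e⟩ := hlift q
        obtain ⟨k, hik, hjk⟩ := directed_of (· ≤ ·) i j
        set p1 := FreeGroup.map (⇑(f i k hik)) p0 with hp1def
        set q1 := FreeGroup.map (⇑(f j k hjk)) q0 with hq1def
        refine ⟨k, p1 * q1 * p1⁻¹ * q1⁻¹, ?_, ?_⟩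
        · have hp1 : p1 ∈ Subgroup.lowerCentralSeries (⊤ : Subgroup (FreeGroup (G k))) n :=
            lowerCentralSeries.map _ n (Subgroup.mem_map_of_mem _ hp0)
          rw [lowerCentralSeries_succ, Subgroup.commutator_def]
          exact Subgroup.subset_closure ⟨p1, hp1, q1, Subgroup.mem_top _, rfl⟩
        · rw [map_mul, map_mul, map_mul, map_inv, map_inv, hp1def, hq1def, hgf, hgf,
            hp0e, hq0e, commutatorElement_def]
      · obtain ⟨i0⟩ := (inferInstance : Nonempty J)
        exact ⟨i0, 1, one_mem _, map_one _⟩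
      · rintro x y hx hy ⟨i, u, hu, hue⟩ ⟨j, v, hv, hve⟩
        obtain ⟨k, hik, hjk⟩ := directed_of (· ≤ ·) i j
        refine ⟨k, FreeGroup.map (⇑(f i k hik)) u * FreeGroup.map (⇑(f j k hjk)) v,
          mul_mem (lowerCentralSeries.map _ _ (Subgroup.mem_map_of_mem _ hu))
            (lowerCentralSeries.map _ _ (Subgroup.mem_map_of_mem _ hv)), ?_⟩
        rw [map_mul, hgf, hgf, hue, hve]
      · rintro x hx ⟨i, u, hu, hue⟩
        exact ⟨i, u⁻¹, inv_mem hu, by rw [map_inv, hue]⟩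
  -- lifting from the relation kernel
  have hliftR : ∀ w ∈ presKer Gc, ∃ (i : J) (w0 : FreeGroup (G i)),
      w0 ∈ presKer (G i) ∧ FreeGroup.map (⇑(g i)) w0 = w := by
    intro w hw
    obtain ⟨i, w0, h0⟩ := hlift w
    have hone : g i (FreeGroup.lift (id : G i → G i) w0) = 1 := by
      rw [← lift_id_map (g i) w0, h0]
      exact (mem_presKer_iff w).mp hw
    obtain ⟨j, h, hj⟩ := hg_eq i _ 1 (by rw [hone, map_one])
    refine ⟨j, FreeGroup.map (⇑(f i j h)) w0, ?_, by rw [hgf, h0]⟩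
    rw [mem_presKer_iff, lift_id_map, hj, map_one]
  -- lifting from `[R, _n F]`
  have hliftC : ∀ (n : ℕ) (w : FreeGroup Gc), w ∈ iterCommWith (presKer Gc) n →
      ∃ (i : J) (w0 : FreeGroup (G i)), w0 ∈ iterCommWith (presKer (G i)) n ∧
        FreeGroup.map (⇑(g i)) w0 = w := by
    intro n
    induction n with
    | zero => exact fun w hw => hliftR w hw
    | succ n ih =>
      intro w hw
      rw [show iterCommWith (presKer Gc) (n + 1)
            = ⁅iterCommWith (presKer Gc) n, (⊤ : Subgroup (FreeGroup Gc))⁆ from rfl,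
        Subgroup.commutator_def] at hw
      refine Subgroup.closure_induction ?_ ?_ ?_ ?_ hw
      · rintro x ⟨p, hp, q, -, rfl⟩
        obtain ⟨i, p0, hp0, hp0e⟩ := ih p hp
        obtain ⟨j, q0, hq0e⟩ := hlift q
        obtain ⟨k, hik, hjk⟩ := directed_of (· ≤ ·) i j
        set p1 := FreeGroup.map (⇑(f i k hik)) p0 with hp1def
        set q1 := FreeGroup.map (⇑(f j k hjk)) q0 with hq1def
        refine ⟨k, ⁅p1, q1⁆, ?_, ?_⟩
        · exact Subgroup.commutator_mem_commutator (mem_iterComm_map (f i k hik) n hp0)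
            (Subgroup.mem_top _)
        · rw [map_commutatorElement, hp1def, hq1def, hgf, hgf, hp0e, hq0e]
      · obtain ⟨i0⟩ := (inferInstance : Nonempty J)
        exact ⟨i0, 1, one_mem _, map_one _⟩
      · rintro x y hx hy ⟨i, u, hu, hue⟩ ⟨j, v, hv, hve⟩
        obtain ⟨k, hik, hjk⟩ := directed_of (· ≤ ·) i j
        refine ⟨k, FreeGroup.map (⇑(f i k hik)) u * FreeGroup.map (⇑(f j k hjk)) v,
          mul_mem (mem_iterComm_map (f i k hik) (n + 1) hu)
            (mem_iterComm_map (f j k hjk) (n + 1) hv), ?_⟩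
        rw [map_mul, hgf, hgf, hue, hve]
      · rintro x hx ⟨i, u, hu, hue⟩
        exact ⟨i, u⁻¹, inv_mem hu, by rw [map_inv, hue]⟩
  refine ⟨?_, ?_, ?_⟩
  · -- compatibility
    intro i j h x
    obtain ⟨⟨w, hw⟩, rfl⟩ := QuotientGroup.mk_surjective x
    have hw' := mem_K_map (f i j h) c hw
    have hw'' := mem_K_map (g j) c hw'
    have hwc := mem_K_map (g i) c hw
    rw [hm i j h w hw hw', hmg j _ hw' hw'', hmg i w hw hwc]
    exact congrArg QuotientGroup.mk (Subtype.ext (hgf i j h w))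
  · -- surjectivity
    intro y
    obtain ⟨⟨w, hw⟩, rfl⟩ := QuotientGroup.mk_surjective y
    have hw1 := (Subgroup.mem_inf.mp hw).1
    have hw2 := (Subgroup.mem_inf.mp hw).2
    obtain ⟨i, w0, hw0γ, hw0e⟩ := hliftγ c w hw2
    have hone : g i (FreeGroup.lift (id : G i → G i) w0) = 1 := by
      rw [← lift_id_map (g i) w0, hw0e]
      exact (mem_presKer_iff w).mp hw1
    obtain ⟨j, h, hj⟩ := hg_eq i _ 1 (by rw [hone, map_one])
    set w1 := FreeGroup.map (⇑(f i j h)) w0 with hw1def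
    have hw1K : w1 ∈ presKer (G j) ⊓ Subgroup.lowerCentralSeries (⊤ : Subgroup (FreeGroup (G j))) c := by
      refine Subgroup.mem_inf.mpr ⟨?_,
        lowerCentralSeries.map _ c (Subgroup.mem_map_of_mem _ hw0γ)⟩
      rw [mem_presKer_iff, hw1def, lift_id_map, hj, map_one]
    have hge : FreeGroup.map (⇑(g j)) w1 = w := by rw [hw1def, hgf, hw0e]
    have hwc := mem_K_map (g j) c hw1K
    refine ⟨j, QuotientGroup.mk ⟨w1, hw1K⟩, ?_⟩
    rw [hmg j w1 hw1K hwc]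
    exact congrArg QuotientGroup.mk (Subtype.ext hge)
  · -- eventual injectivity
    intro i x x' hxx
    obtain ⟨⟨w, hw⟩, rfl⟩ := QuotientGroup.mk_surjective x
    obtain ⟨⟨w', hw'⟩, rfl⟩ := QuotientGroup.mk_surjective x'
    have hwc := mem_K_map (g i) c hw
    have hwc' := mem_K_map (g i) c hw'
    rw [hmg i w hw hwc, hmg i w' hw' hwc'] at hxx
    have hmem : (FreeGroup.map (⇑(g i)) w)⁻¹ * FreeGroup.map (⇑(g i)) w'
        ∈ iterCommWith (presKer Gc) c := by
      have hq := QuotientGroup.eq.mp hxx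
      rw [Subgroup.mem_subgroupOf] at hq
      simpa using hq
    obtain ⟨j, v, hv, hve⟩ := hliftC c _ hmem
    obtain ⟨k, hik, hjk⟩ := directed_of (· ≤ ·) i j
    have hkeq : FreeGroup.map (⇑(g k))
          ((FreeGroup.map (⇑(f i k hik)) w)⁻¹ * FreeGroup.map (⇑(f i k hik)) w')
        = FreeGroup.map (⇑(g k)) (FreeGroup.map (⇑(f j k hjk)) v) := by
      rw [map_mul, map_inv, hgf, hgf, hgf, hve]
    obtain ⟨l, hkl, hleq⟩ := heq2 k _ _ hkeq
    have hil : i ≤ l := le_trans hik hkl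
    refine ⟨l, hil, ?_⟩
    have hwl := mem_K_map (f i l hil) c hw
    have hwl' := mem_K_map (f i l hil) c hw'
    rw [hm i l hil w hw hwl, hm i l hil w' hw' hwl']
    refine QuotientGroup.eq.mpr ?_
    rw [Subgroup.mem_subgroupOf]
    have e1 : (FreeGroup.map (⇑(f i l hil)) w)⁻¹ * FreeGroup.map (⇑(f i l hil)) w'
        = FreeGroup.map (⇑(f j l (le_trans hjk hkl))) v := by
      rw [map_mul, map_inv, hff i k l hik hkl w, hff i k l hik hkl w',
        hff j k l hjk hkl v] at hleq
      exact hleq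
    show (FreeGroup.map (⇑(f i l hil)) w)⁻¹ * FreeGroup.map (⇑(f i l hil)) w'
        ∈ iterCommWith (presKer (G l)) c
    rw [e1]
    exact mem_iterComm_map (f j l (le_trans hjk hkl)) c hv
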